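/- arXiv:1111.6094 — 2 statements merged into one kernel-verified Lean document; each statement's English description precedes it below -/
import Mathlib

section
/- Let A be a q-positive subset of an SSD space B. If A is convex and closed in the w(B,B) topology, then A = G_{Φ_A}. Likewise, if A is maximally q-positive, then A = G_{Φ_A}. -/
noncomputable section

variable {B : Type*} [AddCommGroup B] [Module ℝ B]

/-- The quadratic form `q(x) = ½⌊x,x⌋` associated to the bilinear form `br`. -/
def qQ (br : B →ₗ[ℝ] B →ₗ[ℝ] ℝ) (x : B) : ℝ := (1 / 2) * br x x

/-- `A` is `q`-positive: nonempty and `q(b - c) ≥ 0` for all `b, c ∈ A`. -/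
def IsQPositive (br : B →ₗ[ℝ] B →ₗ[ℝ] ℝ) (A : Set B) : Prop :=
  A.Nonempty ∧ ∀ b ∈ A, ∀ c ∈ A, 0 ≤ qQ br (b - c)

/-- `A^π`, the set of points `q`-positively related to `A`. -/
def qPi (br : B →ₗ[ℝ] B →ₗ[ℝ] ℝ) (A : Set B) : Set B :=
  {b : B | ∀ a ∈ A, 0 ≤ qQ br (b - a)}

/-- `A` is maximally `q`-positive. -/
def IsMaxQPositive (br : B →ₗ[ℝ] B →ₗ[ℝ] ℝ) (A : Set B) : Prop :=
  IsQPositive br A ∧ ∀ C : Set B, IsQPositive br C → A ⊆ C → C = A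

/-- The generalized Fitzpatrick function `Φ_A(x) = sup_{a ∈ A} (⌊x,a⌋ - q(a))`. -/
def PhiF (br : B →ₗ[ℝ] B →ₗ[ℝ] ℝ) (A : Set B) (x : B) : EReal :=
  ⨆ a ∈ A, ((br x a - qQ br a : ℝ) : EReal)

/-- The intrinsic conjugate `f^@(b) = sup_{c ∈ B} (⌊c,b⌋ - f(c))`. -/
def intrinsicConj (br : B →ₗ[ℝ] B →ₗ[ℝ] ℝ) (f : B → EReal) (b : B) : EReal :=
  ⨆ c : B, ((br c b : ℝ) : EReal) - f c

/-- `P_q(f) = {b : f(b) = q(b)}`. -/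
def PqSet (br : B →ₗ[ℝ] B →ₗ[ℝ] ℝ) (f : B → EReal) : Set B :=
  {b : B | f b = ((qQ br b : ℝ) : EReal)}

/-- `G_f = {b : f(b) + f^@(b) = ⌊b,b⌋}`. -/
def GSet (br : B →ₗ[ℝ] B →ₗ[ℝ] ℝ) (f : B → EReal) : Set B :=
  {b : B | f b + intrinsicConj br f b = ((br b b : ℝ) : EReal)}

/-- Convexity for `ℝ ∪ {+∞}`-valued functions. -/
def ConvexE (f : B → EReal) : Prop :=
  ∀ x y : B, ∀ α β : ℝ, 0 ≤ α → 0 ≤ β → α + β = 1 →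
    f (α • x + β • y) ≤ (α : EReal) * f x + (β : EReal) * f y

/-- The weak topology `w(B,B)` induced by the functionals `⌊·,b⌋`, `b ∈ B`. -/
def weakTop (br : B →ₗ[ℝ] B →ₗ[ℝ] ℝ) : TopologicalSpace B :=
  ⨅ b : B, TopologicalSpace.induced (fun x => br x b) inferInstance

/-- Lower semicontinuity with respect to the weak topology `w(B,B)`. -/
def LscW (br : B →ₗ[ℝ] B →ₗ[ℝ] ℝ) (f : B → EReal) : Prop :=
  @LowerSemicontinuous B EReal (weakTop br) _ f

/-- `A` is `q`-representable: it has a `w(B,B)`-lsc proper convex `q`-representation. -/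
def IsQRepresentable (br : B →ₗ[ℝ] B →ₗ[ℝ] ℝ) (A : Set B) : Prop :=
  ∃ f : B → EReal, LscW br f ∧ ConvexE f ∧ (∃ x, f x ≠ ⊤) ∧
    (∀ x, ((qQ br x : ℝ) : EReal) ≤ f x) ∧ PqSet br f = A


lemma qQ_sub (br : B →ₗ[ℝ] B →ₗ[ℝ] ℝ) (hsym : ∀ x y : B, br x y = br y x) (x y : B) :
    qQ br (x - y) = qQ br x + qQ br y - br x y := by
  simp only [qQ, map_sub, LinearMap.sub_apply]
  rw [hsym y x]; ring

lemma br_self (br : B →ₗ[ℝ] B →ₗ[ℝ] ℝ) (x : B) : br x x = 2 * qQ br x := by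
  unfold qQ; ring

lemma phiF_eq (br : B →ₗ[ℝ] B →ₗ[ℝ] ℝ) (hsym : ∀ x y : B, br x y = br y x)
    {A : Set B} (hA : IsQPositive br A) {a : B} (ha : a ∈ A) :
    PhiF br A a = ((qQ br a : ℝ) : EReal) := by
  refine le_antisymm (iSup₂_le fun a' ha' => ?_) ?_
  · refine EReal.coe_le_coe_iff.2 ?_
    have h := hA.2 a ha a' ha'
    rw [qQ_sub br hsym] at h
    linarith
  · refine le_iSup₂_of_le a ha ?_
    refine EReal.coe_le_coe_iff.2 ?_
    rw [br_self]; linarith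

lemma conj_eq (br : B →ₗ[ℝ] B →ₗ[ℝ] ℝ) (hsym : ∀ x y : B, br x y = br y x)
    {A : Set B} (hA : IsQPositive br A) {a : B} (ha : a ∈ A) :
    intrinsicConj br (PhiF br A) a = ((qQ br a : ℝ) : EReal) := by
  refine le_antisymm (iSup_le fun c => ?_) ?_
  · have h1 : ((br c a - qQ br a : ℝ) : EReal) ≤ PhiF br A c := le_iSup₂_of_le a ha le_rfl
    calc ((br c a : ℝ) : EReal) - PhiF br A c
        ≤ ((br c a : ℝ) : EReal) - ((br c a - qQ br a : ℝ) : EReal) :=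
          EReal.sub_le_sub le_rfl h1
      _ = ((qQ br a : ℝ) : EReal) := by
          rw [← EReal.coe_sub]; norm_num
  · refine le_iSup_of_le a ?_
    rw [phiF_eq br hsym hA ha, ← EReal.coe_sub, br_self]
    refine EReal.coe_le_coe_iff.2 (by linarith)

lemma A_subset_G (br : B →ₗ[ℝ] B →ₗ[ℝ] ℝ) (hsym : ∀ x y : B, br x y = br y x)
    {A : Set B} (hA : IsQPositive br A) : A ⊆ GSet br (PhiF br A) := by
  intro a ha
  show PhiF br A a + intrinsicConj br (PhiF br A) a = ((br a a : ℝ) : EReal)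
  rw [phiF_eq br hsym hA ha, conj_eq br hsym hA ha, ← EReal.coe_add, br_self]
  exact EReal.coe_eq_coe_iff.2 (by ring)

lemma G_real (br : B →ₗ[ℝ] B →ₗ[ℝ] ℝ) (hsym : ∀ x y : B, br x y = br y x)
    {A : Set B} (hA : IsQPositive br A) {b : B} (hb : b ∈ GSet br (PhiF br A)) :
    ∃ r s : ℝ, PhiF br A b = (r : EReal) ∧ intrinsicConj br (PhiF br A) b = (s : EReal) ∧
      r + s = br b b ∧ (∀ a ∈ A, br b a - qQ br a ≤ r) ∧ r ≤ s := by
  obtain ⟨a₀, ha₀⟩ := hA.1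
  have hb' : PhiF br A b + intrinsicConj br (PhiF br A) b = ((br b b : ℝ) : EReal) := hb
  have hpbot : PhiF br A b ≠ ⊥ := by
    intro h
    have := le_iSup₂_of_le (f := fun a _ => ((br b a - qQ br a : ℝ) : EReal)) a₀ ha₀ le_rfl
    rw [show (⨆ a ∈ A, ((br b a - qQ br a : ℝ) : EReal)) = PhiF br A b from rfl, h] at this
    exact not_le.2 (EReal.bot_lt_coe _) this
  have hcbot : intrinsicConj br (PhiF br A) b ≠ ⊥ := by
    intro h
    have h2 : ((br a₀ b - qQ br a₀ : ℝ) : EReal) ≤ intrinsicConj br (PhiF br A) b := by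
      refine le_iSup_of_le a₀ ?_
      rw [phiF_eq br hsym hA ha₀, ← EReal.coe_sub]
    rw [h] at h2
    exact not_le.2 (EReal.bot_lt_coe _) h2
  have hptop : PhiF br A b ≠ ⊤ := by
    intro h
    rw [h, EReal.top_add_of_ne_bot hcbot] at hb'
    exact (EReal.coe_ne_top _) hb'.symm
  have hctop : intrinsicConj br (PhiF br A) b ≠ ⊤ := by
    intro h
    rw [h, EReal.add_top_of_ne_bot hpbot] at hb'
    exact (EReal.coe_ne_top _) hb'.symm
  refine ⟨(PhiF br A b).toReal, (intrinsicConj br (PhiF br A) b).toReal,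
    (EReal.coe_toReal hptop hpbot).symm, (EReal.coe_toReal hctop hcbot).symm, ?_, ?_, ?_⟩
  · have := hb'
    rw [← EReal.coe_toReal hptop hpbot, ← EReal.coe_toReal hctop hcbot, ← EReal.coe_add] at this
    exact_mod_cast this
  · intro a ha
    have h2 : ((br b a - qQ br a : ℝ) : EReal) ≤ PhiF br A b := le_iSup₂_of_le a ha le_rfl
    rw [← EReal.coe_toReal hptop hpbot] at h2
    exact_mod_cast h2
  · have h2 : PhiF br A b ≤ intrinsicConj br (PhiF br A) b := by
      refine iSup₂_le fun a ha => ?_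
      refine le_iSup_of_le a ?_
      rw [phiF_eq br hsym hA ha, ← EReal.coe_sub, hsym b a]
    rw [← EReal.coe_toReal hptop hpbot, ← EReal.coe_toReal hctop hcbot] at h2
    exact_mod_cast h2

lemma weak_separation (br : B →ₗ[ℝ] B →ₗ[ℝ] ℝ) {A : Set B}
    (hconv : Convex ℝ A) (hclosed : @IsClosed B (weakTop br) A) {b : B} (hb : b ∉ A) :
    ∃ d : B, ∃ lam : ℝ, (∀ a ∈ A, br a d ≤ lam) ∧ lam < br b d := by
  classical
  letI : TopologicalSpace B := weakTop br
  have hopen : IsOpen Aᶜ := hclosed.isOpen_compl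
  have hmem : Aᶜ ∈ @nhds B (weakTop br) b := hopen.mem_nhds hb
  have hnhds : @nhds B (weakTop br) b
      = ⨅ c : B, @nhds B (TopologicalSpace.induced (fun x => br x c) inferInstance) b := by
    show @nhds B (⨅ c : B, TopologicalSpace.induced (fun x => br x c) inferInstance) b = _
    exact nhds_iInf
  rw [hnhds] at hmem
  rw [Filter.mem_iInf] at hmem
  obtain ⟨I, hIfin, V, hV, hInter⟩ := hmem
  haveI : Fintype ↑I := hIfin.fintype
  have hV' : ∀ i : ↑I, ∃ O : Set ℝ, IsOpen O ∧ br b ↑i ∈ O ∧ (fun x => br x ↑i) ⁻¹' O ⊆ V i := by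
    intro i
    have := hV i
    rw [nhds_induced] at this
    obtain ⟨U, hU, hUV⟩ := this
    obtain ⟨O, hOU, hOopen, hbO⟩ := mem_nhds_iff.1 hU
    exact ⟨O, hOopen, hbO, fun x hx => hUV (hOU hx)⟩
  choose O hOopen hbO hOV using hV'
  set T : B →ₗ[ℝ] (↑I → ℝ) := LinearMap.pi (fun i => br.flip ↑i) with hT
  have hTx : ∀ (x : B) (i : ↑I), T x i = br x ↑i := fun x i => rfl
  have hTb : T b ∉ closure (T '' A) := by
    intro hcl
    have hOp : IsOpen (Set.pi Set.univ O) := isOpen_set_pi Set.finite_univ (fun i _ => hOopen i)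
    have hbOp : T b ∈ Set.pi Set.univ O := fun i _ => hbO i
    obtain ⟨z, hz1, hz2⟩ := mem_closure_iff.1 hcl _ hOp hbOp
    obtain ⟨a, haA, rfl⟩ := hz2
    have : a ∈ ⋂ i : ↑I, V i := by
      refine Set.mem_iInter.2 fun i => hOV i ?_
      exact hz1 i (Set.mem_univ i)
    rw [← hInter] at this
    exact this haA
  have hKconv : Convex ℝ (closure (T '' A)) := (hconv.linear_image T).closure
  obtain ⟨f, u, hfb, hfA⟩ :=
    geometric_hahn_banach_point_closed hKconv isClosed_closure hTb
  set e : ↑I → (↑I → ℝ) := fun i j => if i = j then 1 else 0 with he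
  set d : B := ∑ i : ↑I, (-(f (e i))) • (↑i : B) with hd
  have key : ∀ x : B, br x d = - f (T x) := by
    intro x
    have h1 : f (T x) = ∑ i : ↑I, (T x) i • (f.toLinearMap (e i)) :=
      LinearMap.pi_apply_eq_sum_univ f.toLinearMap (T x)
    rw [hd, map_sum, h1, ← Finset.sum_neg_distrib]
    exact Finset.sum_congr rfl fun i _ => by
      rw [map_smul]
      simp only [smul_eq_mul, hTx, ContinuousLinearMap.coe_coe]
      ring
  refine ⟨d, -u, ?_, ?_⟩
  · intro a ha
    have h2 := hfA (T a) (subset_closure ⟨a, ha, rfl⟩)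
    rw [key]; linarith
  · rw [key]; linarith


/-- If A is convex and w(B,B)-closed then A = G_{Φ_A};
likewise if A is maximally q-positive then A = G_{Φ_A}. -/
theorem stmt8 [Nontrivial B] (br : B →ₗ[ℝ] B →ₗ[ℝ] ℝ)
    (hsym : ∀ x y : B, br x y = br y x)
    (A : Set B) (hA : IsQPositive br A) :
    (Convex ℝ A → @IsClosed B (weakTop br) A → A = GSet br (PhiF br A)) ∧
    (IsMaxQPositive br A → A = GSet br (PhiF br A)) := by
  constructor
  · intro hconv hclosed
    refine Set.Subset.antisymm (A_subset_G br hsym hA) fun b hb => ?_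
    by_contra hbA
    obtain ⟨r, s, hr, hs, hrs, hbound, -⟩ := G_real br hsym hA hb
    obtain ⟨d, lam, hd1, hd2⟩ := weak_separation br hconv hclosed hbA
    have hphic : PhiF br A (b + d) ≤ ((r + lam : ℝ) : EReal) := by
      refine iSup₂_le fun a ha => EReal.coe_le_coe_iff.2 ?_
      have h1 := hbound a ha
      have h2 := hd1 a ha
      have h3 : br (b + d) a = br b a + br d a := by
        rw [map_add]; rfl
      rw [h3, hsym d a]
      linarith
    have hterm : ((br (b + d) b : ℝ) : EReal) - PhiF br A (b + d)
        ≤ intrinsicConj br (PhiF br A) b :=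
      le_iSup (fun c => ((br c b : ℝ) : EReal) - PhiF br A c) (b + d)
    rw [hs] at hterm
    have h3 : ((br (b + d) b - (r + lam) : ℝ) : EReal) ≤ (s : EReal) := by
      calc ((br (b + d) b - (r + lam) : ℝ) : EReal)
          = ((br (b + d) b : ℝ) : EReal) - ((r + lam : ℝ) : EReal) := EReal.coe_sub _ _
        _ ≤ ((br (b + d) b : ℝ) : EReal) - PhiF br A (b + d) := EReal.sub_le_sub le_rfl hphic
        _ ≤ (s : EReal) := hterm
    have h4 : br (b + d) b - (r + lam) ≤ s := EReal.coe_le_coe_iff.1 h3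
    have h5 : br (b + d) b = br b b + br d b := by rw [map_add]; rfl
    have h6 : br d b = br b d := hsym d b
    linarith
  · intro hmax
    refine Set.Subset.antisymm (A_subset_G br hsym hA) fun b hb => ?_
    obtain ⟨r, s, hr, hs, hrs, hbound, hrls⟩ := G_real br hsym hA hb
    have hbb := br_self br b
    have hrq : r ≤ qQ br b := by linarith
    have hpos : ∀ a ∈ A, 0 ≤ qQ br (b - a) := by
      intro a ha
      rw [qQ_sub br hsym]
      have := hbound a ha
      linarith
    have hC : IsQPositive br (insert b A) := by
      refine ⟨⟨b, Set.mem_insert _ _⟩, ?_⟩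
      rintro x hx y hy
      rcases hx with hx | hx <;> rcases hy with hy | hy
      · rw [hx, hy]; simp [qQ]
      · rw [hx]; exact hpos y hy
      · rw [hy]
        rw [qQ_sub br hsym, hsym x b]
        have := hpos x hx
        rw [qQ_sub br hsym] at this
        linarith
      · exact hA.2 x hx y hy
    have hCA := hmax.2 _ hC (Set.subset_insert b A)
    rw [← hCA]
    exact Set.mem_insert b A
end
end

section
/- Let A be a nonempty subset of an SSD space B and let D be a w(B,B)-closed convex subset of B such that Φ_A(b) ≥ q(b) for all b ∈ D. If A^π ∩ D ≠ ∅, then A^π ∩ D is q-representable. -/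
noncomputable section

variable {B : Type*} [AddCommGroup B] [Module ℝ B]

section Aux

variable {B : Type*} [AddCommGroup B] [Module ℝ B]

lemma qQ_sub_eq (br : B →ₗ[ℝ] B →ₗ[ℝ] ℝ) (hsym : ∀ x y : B, br x y = br y x) (b a : B) :
    qQ br (b - a) = qQ br b + qQ br a - br b a := by
  simp only [qQ, map_sub, LinearMap.sub_apply]
  rw [hsym a b]; ring

lemma PhiF_le_q_of_mem_qPi (br : B →ₗ[ℝ] B →ₗ[ℝ] ℝ) (hsym : ∀ x y : B, br x y = br y x)
    (A : Set B) (b : B) (hb : b ∈ qPi br A) :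
    PhiF br A b ≤ ((qQ br b : ℝ) : EReal) := by
  refine iSup₂_le fun a ha => ?_
  rw [EReal.coe_le_coe_iff]
  have := hb a ha
  rw [qQ_sub_eq br hsym b a] at this
  linarith

lemma mem_qPi_of_PhiF_le (br : B →ₗ[ℝ] B →ₗ[ℝ] ℝ) (hsym : ∀ x y : B, br x y = br y x)
    (A : Set B) (b : B) (hb : PhiF br A b ≤ ((qQ br b : ℝ) : EReal)) :
    b ∈ qPi br A := by
  intro a ha
  have h : ((br b a - qQ br a : ℝ) : EReal) ≤ ((qQ br b : ℝ) : EReal) :=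
    le_trans (le_iSup₂ (f := fun a (_ : a ∈ A) => ((br b a - qQ br a : ℝ) : EReal)) a ha) hb
  rw [EReal.coe_le_coe_iff] at h
  rw [qQ_sub_eq br hsym b a]
  linarith

lemma PhiF_ne_bot (br : B →ₗ[ℝ] B →ₗ[ℝ] ℝ) (A : Set B) (hA : A.Nonempty) (x : B) :
    PhiF br A x ≠ ⊥ := by
  obtain ⟨a, ha⟩ := hA
  have h : ((br x a - qQ br a : ℝ) : EReal) ≤ PhiF br A x :=
    le_iSup₂ (f := fun a (_ : a ∈ A) => ((br x a - qQ br a : ℝ) : EReal)) a ha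
  intro hbot
  rw [hbot, le_bot_iff] at h
  exact EReal.coe_ne_bot _ h

lemma coe_mul_ne_bot (α : ℝ) (hα : 0 ≤ α) (x : EReal) (hx : x ≠ ⊥) :
    (α : EReal) * x ≠ ⊥ := by
  induction x using EReal.rec with
  | bot => exact absurd rfl hx
  | coe r => rw [← EReal.coe_mul]; exact EReal.coe_ne_bot _
  | top =>
    rcases eq_or_lt_of_le hα with h | h
    · rw [← h]; simp
    · rw [EReal.mul_top_of_pos (by exact_mod_cast h)]; simp

end Aux

/-- If D is w(B,B)-closed convex with Φ_A ≥ q on D and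
A^π ∩ D ≠ ∅, then A^π ∩ D is q-representable. -/
theorem stmt9 [Nontrivial B] (br : B →ₗ[ℝ] B →ₗ[ℝ] ℝ)
    (hsym : ∀ x y : B, br x y = br y x)
    (A D : Set B) (hA : A.Nonempty)
    (hDclosed : @IsClosed B (weakTop br) D) (hDconv : Convex ℝ D)
    (hPhi : ∀ b ∈ D, ((qQ br b : ℝ) : EReal) ≤ PhiF br A b)
    (hne : (qPi br A ∩ D).Nonempty) :
    IsQRepresentable br (qPi br A ∩ D) := by
  classical
  set f : B → EReal := fun x => if x ∈ D then PhiF br A x else ⊤ with hf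
  have hfne_bot : ∀ x, f x ≠ ⊥ := by
    intro x
    by_cases hx : x ∈ D <;> simp only [hf, hx, if_pos, if_neg, not_false_iff]
    · exact PhiF_ne_bot br A hA x
    · simp [hx]
  have hfge : ∀ x, ((qQ br x : ℝ) : EReal) ≤ f x := by
    intro x
    by_cases hx : x ∈ D
    · simpa only [hf, if_pos hx] using hPhi x hx
    · simp [hf, hx]
  refine ⟨f, ?_, ?_, ?_, hfge, ?_⟩
  · -- lower semicontinuity
    letI : TopologicalSpace B := weakTop br
    intro x y hy
    by_cases hx : x ∈ D
    · simp only [hf, if_pos hx] at hy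
      obtain ⟨a, ha, hya⟩ : ∃ a ∈ A, y < ((br x a - qQ br a : ℝ) : EReal) := by
        simpa [PhiF, lt_iSup_iff] using hy
      have hcont : @Continuous B ℝ (weakTop br) _ (fun z => br z a) :=
        continuous_iInf_dom continuous_induced_dom
      have hcont2 : @Continuous B EReal (weakTop br) _
          (fun z => ((br z a - qQ br a : ℝ) : EReal)) := by
        exact (continuous_coe_real_ereal).comp ((hcont.sub continuous_const))
      have hopen : @IsOpen B (weakTop br)
          {z | y < ((br z a - qQ br a : ℝ) : EReal)} := by
        have := hcont2.isOpen_preimage (Set.Ioi y) isOpen_Ioi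
        simpa [Set.preimage] using this
      have hmem : {z | y < ((br z a - qQ br a : ℝ) : EReal)} ∈ @nhds B (weakTop br) x :=
        hopen.mem_nhds hya
      refine Filter.eventually_of_mem hmem fun z hz => lt_of_lt_of_le hz ?_
      by_cases hzD : z ∈ D
      · simp only [hf, if_pos hzD]
        exact le_iSup₂ (f := fun a (_ : a ∈ A) => ((br z a - qQ br a : ℝ) : EReal)) a ha
      · simp [hf, hzD]
    · have hopen : @IsOpen B (weakTop br) Dᶜ := hDclosed.isOpen_compl
      have hmem : Dᶜ ∈ @nhds B (weakTop br) x := hopen.mem_nhds hx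
      refine Filter.eventually_of_mem hmem fun z hz => ?_
      simp only [hf, if_neg hz]
      exact lt_of_lt_of_le hy le_top
  · -- convexity
    intro x y α β hα hβ hαβ
    rcases eq_or_lt_of_le hα with hα0 | hαpos
    · have hβ1 : β = 1 := by linarith
      subst hβ1; rw [← hα0]
      simp [hfne_bot x, EReal.zero_mul, one_smul, zero_smul]
    rcases eq_or_lt_of_le hβ with hβ0 | hβpos
    · have hα1 : α = 1 := by linarith
      subst hα1; rw [← hβ0]
      simp [hfne_bot y, EReal.zero_mul, one_smul, zero_smul]
    by_cases hx : x ∈ D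
    · by_cases hy : y ∈ D
      · have hcombo : α • x + β • y ∈ D := hDconv hx hy hα hβ hαβ
        simp only [hf, if_pos hx, if_pos hy, if_pos hcombo]
        refine iSup₂_le fun a ha => ?_
        have hterm : (br (α • x + β • y) a - qQ br a : ℝ)
            = α * (br x a - qQ br a) + β * (br y a - qQ br a) := by
          simp only [map_add, map_smul, LinearMap.add_apply, LinearMap.smul_apply,
            smul_eq_mul]
          linear_combination (qQ br a) * hαβ
        rw [hterm]
        push_cast
        refine add_le_add ?_ ?_
        · exact mul_le_mul_of_nonneg_left
            (le_iSup₂ (f := fun a (_ : a ∈ A) => ((br x a - qQ br a : ℝ) : EReal)) a ha)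
            (by exact_mod_cast hα)
        · exact mul_le_mul_of_nonneg_left
            (le_iSup₂ (f := fun a (_ : a ∈ A) => ((br y a - qQ br a : ℝ) : EReal)) a ha)
            (by exact_mod_cast hβ)
      · have : (β : EReal) * f y = ⊤ := by
          simp only [hf, if_neg hy]
          exact EReal.mul_top_of_pos (by exact_mod_cast hβpos)
        rw [this, EReal.add_top_of_ne_bot]
        · exact le_top
        · exact coe_mul_ne_bot α hα (f x) (hfne_bot x)
    · have : (α : EReal) * f x = ⊤ := by
        simp only [hf, if_neg hx]
        exact EReal.mul_top_of_pos (by exact_mod_cast hαpos)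
      rw [this, EReal.top_add_of_ne_bot]
      · exact le_top
      · exact coe_mul_ne_bot β hβ (f y) (hfne_bot y)
  · -- properness
    obtain ⟨b, hbpi, hbD⟩ := hne
    refine ⟨b, ?_⟩
    simp only [hf, if_pos hbD]
    exact fun htop => (htop ▸ PhiF_le_q_of_mem_qPi br hsym A b hbpi).not_gt
      (EReal.coe_lt_top _)
  · -- PqSet f = qPi ∩ D
    ext b
    simp only [PqSet, Set.mem_setOf_eq, Set.mem_inter_iff]
    by_cases hbD : b ∈ D
    · simp only [hf, if_pos hbD]
      constructor
      · intro h
        exact ⟨mem_qPi_of_PhiF_le br hsym A b h.le, hbD⟩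
      · intro ⟨hpi, _⟩
        exact le_antisymm (PhiF_le_q_of_mem_qPi br hsym A b hpi) (hPhi b hbD)
    · simp only [hf, if_neg hbD]
      constructor
      · intro h; exact absurd h.symm (EReal.coe_ne_top _)
      · intro ⟨_, h⟩; exact absurd h hbD
end
end
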